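/- Let H = p_r^2 + p_φ^2/r^2 + a r^2 + b1/(r^2 sin^2(kφ)) + b2/(r^2 cos^2(kφ)) on the open set r > 0, sin(kφ) ≠ 0, cos(kφ) ≠ 0, where k is a positive integer and a, b1, b2 are real. Then the function G = p_φ^2 + b1/sin^2(kφ) + b2/cos^2(kφ) Poisson commutes with H. -/

import Mathlib

/-- Canonical Poisson bracket on R^4:
{F,G} = sum_i (dF/dq_i dG/dp_i - dF/dp_i dG/dq_i). -/
noncomputable def pb (F G : ℝ → ℝ → ℝ → ℝ → ℝ) (q1 q2 p1 p2 : ℝ) : ℝ :=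
  deriv (fun x => F x q2 p1 p2) q1 * deriv (fun x => G q1 q2 x p2) p1
  - deriv (fun x => F q1 q2 x p2) p1 * deriv (fun x => G x q2 p1 p2) q1
  + deriv (fun x => F q1 x p1 p2) q2 * deriv (fun x => G q1 q2 p1 x) p2
  - deriv (fun x => F q1 q2 p1 x) p2 * deriv (fun x => G q1 x p1 p2) q2

set_option maxHeartbeats 1000000 in
/-- For the k-deformed Smorodinsky-Winternitz Hamiltonian in polar coordinates
H = p_r^2 + p_phi^2/r^2 + a r^2 + b1/(r^2 sin^2(k phi)) + b2/(r^2 cos^2(k phi)),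
the angular integral G = p_phi^2 + b1/sin^2(k phi) + b2/cos^2(k phi) Poisson
commutes with H on the open set r > 0, sin(k phi) ≠ 0, cos(k phi) ≠ 0.
Coordinates of pb are (r, phi, p_r, p_phi). -/
theorem SW_deformed_polar_integral (k : ℕ) (hk : 0 < k) (a b1 b2 : ℝ)
    (r φ pr pφ : ℝ) (hr : 0 < r)
    (hs : Real.sin (k * φ) ≠ 0) (hc : Real.cos (k * φ) ≠ 0) :
    pb (fun r φ pr pφ =>
          pr ^ 2 + pφ ^ 2 / r ^ 2 + a * r ^ 2
            + b1 / (r ^ 2 * Real.sin (k * φ) ^ 2)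
            + b2 / (r ^ 2 * Real.cos (k * φ) ^ 2))
       (fun _ φ _ pφ =>
          pφ ^ 2 + b1 / Real.sin (k * φ) ^ 2 + b2 / Real.cos (k * φ) ^ 2)
       r φ pr pφ = 0 := by

  have hS := hs; have hC := hc
  have hS2 : Real.sin (k * φ) ^ 2 ≠ 0 := pow_ne_zero _ hs
  have hC2 : Real.cos (k * φ) ^ 2 ≠ 0 := pow_ne_zero _ hc
  have hr' : r ^ 2 ≠ 0 := pow_ne_zero _ hr.ne'
  -- derivative of x ↦ k*x
  have hkx : HasDerivAt (fun x : ℝ => (k : ℝ) * x) (k : ℝ) φ := by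
    simpa using (hasDerivAt_id φ).const_mul (k : ℝ)
  have hsin : HasDerivAt (fun x : ℝ => Real.sin ((k : ℝ) * x))
      (Real.cos ((k : ℝ) * φ) * (k : ℝ)) φ :=
    (Real.hasDerivAt_sin _).comp φ hkx
  have hcos : HasDerivAt (fun x : ℝ => Real.cos ((k : ℝ) * x))
      (-Real.sin ((k : ℝ) * φ) * (k : ℝ)) φ :=
    (Real.hasDerivAt_cos _).comp φ hkx
  have hsin2 : HasDerivAt (fun x : ℝ => Real.sin ((k : ℝ) * x) ^ 2)
      (2 * Real.sin ((k : ℝ) * φ) ^ 1 * (Real.cos ((k : ℝ) * φ) * (k : ℝ))) φ := by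
    simpa using hsin.fun_pow 2
  have hcos2 : HasDerivAt (fun x : ℝ => Real.cos ((k : ℝ) * x) ^ 2)
      (2 * Real.cos ((k : ℝ) * φ) ^ 1 * (-Real.sin ((k : ℝ) * φ) * (k : ℝ))) φ := by
    simpa using hcos.fun_pow 2
  set S := Real.sin ((k : ℝ) * φ) with hSdef
  set C := Real.cos ((k : ℝ) * φ) with hCdef
  -- angular derivatives of G's potential terms
  have hb1 : HasDerivAt (fun x : ℝ => b1 / Real.sin ((k : ℝ) * x) ^ 2)
      ((0 * S ^ 2 - b1 * (2 * S ^ 1 * (C * k))) / (S ^ 2) ^ 2) φ :=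
    (hasDerivAt_const φ b1).div hsin2 hS2
  have hb2 : HasDerivAt (fun x : ℝ => b2 / Real.cos ((k : ℝ) * x) ^ 2)
      ((0 * C ^ 2 - b2 * (2 * C ^ 1 * (-S * k))) / (C ^ 2) ^ 2) φ :=
    (hasDerivAt_const φ b2).div hcos2 hC2
  -- angular derivatives of H's potential terms
  have hrs2 : HasDerivAt (fun x : ℝ => r ^ 2 * Real.sin ((k : ℝ) * x) ^ 2)
      (r ^ 2 * (2 * S ^ 1 * (C * k))) φ := hsin2.const_mul _
  have hrc2 : HasDerivAt (fun x : ℝ => r ^ 2 * Real.cos ((k : ℝ) * x) ^ 2)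
      (r ^ 2 * (2 * C ^ 1 * (-S * k))) φ := hcos2.const_mul _
  have hHb1 : HasDerivAt (fun x : ℝ => b1 / (r ^ 2 * Real.sin ((k : ℝ) * x) ^ 2))
      ((0 * (r ^ 2 * S ^ 2) - b1 * (r ^ 2 * (2 * S ^ 1 * (C * k)))) / (r ^ 2 * S ^ 2) ^ 2) φ :=
    (hasDerivAt_const φ b1).div hrs2 (mul_ne_zero hr' hS2)
  have hHb2 : HasDerivAt (fun x : ℝ => b2 / (r ^ 2 * Real.cos ((k : ℝ) * x) ^ 2))
      ((0 * (r ^ 2 * C ^ 2) - b2 * (r ^ 2 * (2 * C ^ 1 * (-S * k)))) / (r ^ 2 * C ^ 2) ^ 2) φ :=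
    (hasDerivAt_const φ b2).div hrc2 (mul_ne_zero hr' hC2)
  -- full φ-derivatives
  have hGphi : HasDerivAt (fun x : ℝ =>
      pφ ^ 2 + b1 / Real.sin ((k : ℝ) * x) ^ 2 + b2 / Real.cos ((k : ℝ) * x) ^ 2)
      ((0 * S ^ 2 - b1 * (2 * S ^ 1 * (C * k))) / (S ^ 2) ^ 2
        + (0 * C ^ 2 - b2 * (2 * C ^ 1 * (-S * k))) / (C ^ 2) ^ 2) φ :=
    (((hasDerivAt_const φ (pφ ^ 2)).add hb1).add hb2).congr_deriv (by ring)
  have hHphi : HasDerivAt (fun x : ℝ =>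
      pr ^ 2 + pφ ^ 2 / r ^ 2 + a * r ^ 2
        + b1 / (r ^ 2 * Real.sin ((k : ℝ) * x) ^ 2)
        + b2 / (r ^ 2 * Real.cos ((k : ℝ) * x) ^ 2))
      ((0 * (r ^ 2 * S ^ 2) - b1 * (r ^ 2 * (2 * S ^ 1 * (C * k)))) / (r ^ 2 * S ^ 2) ^ 2
        + (0 * (r ^ 2 * C ^ 2) - b2 * (r ^ 2 * (2 * C ^ 1 * (-S * k)))) / (r ^ 2 * C ^ 2) ^ 2) φ :=
    (((hasDerivAt_const φ (pr ^ 2 + pφ ^ 2 / r ^ 2 + a * r ^ 2)).add hHb1).add hHb2).congr_deriv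
      (by ring)
  -- pφ-derivatives
  have hGp : HasDerivAt (fun x : ℝ => x ^ 2 + b1 / S ^ 2 + b2 / C ^ 2) (2 * pφ) pφ := by
    simpa using (((hasDerivAt_pow 2 pφ)).add_const (b1 / S ^ 2)).add_const (b2 / C ^ 2)
  have hHp : HasDerivAt (fun x : ℝ =>
      pr ^ 2 + x ^ 2 / r ^ 2 + a * r ^ 2 + b1 / (r ^ 2 * S ^ 2) + b2 / (r ^ 2 * C ^ 2))
      (2 * pφ / r ^ 2) pφ := by
    have h := ((((hasDerivAt_pow 2 pφ).div_const (r ^ 2)).const_add (pr ^ 2)).add_const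
      (a * r ^ 2)).add_const (b1 / (r ^ 2 * S ^ 2)) |>.add_const (b2 / (r ^ 2 * C ^ 2))
    simpa [add_assoc] using h
  simp only [pb]
  rw [show (fun x => pφ ^ 2 + b1 / Real.sin ((k:ℝ) * φ) ^ 2 + b2 / Real.cos ((k:ℝ) * φ) ^ 2 : ℝ → ℝ)
      = fun _ => pφ ^ 2 + b1 / S ^ 2 + b2 / C ^ 2 from rfl]
  rw [deriv_const, deriv_const, hGphi.deriv, hHphi.deriv, hGp.deriv, hHp.deriv]
  field_simp
  ring
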